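/- arXiv:1611.06488 — 2 statements merged into one kernel-verified Lean document; each statement's English description precedes it below -/
import Mathlib

section
/- Define a sequence of functions u_k : ℝ × ℝ → ℝ recursively by u_0(x, t) = x and u_{k+1}(x, t) = ∫₀ᵗ [ (∂²u_k/∂x²)(x, τ) + ∑_{r=0}^{k} u_r(x/2, τ/2) · (∂u_{k−r}/∂x)(x, τ/2) + (1/2) u_k(x, τ) ] dτ. Then for every k ≥ 0 and all x, t ∈ ℝ, u_k(x, t) = x · t^k / k!; consequently ∑_{k=0}^{∞} u_k(x, t) = x·e^t. -/
theorem hptm_iterates_ex1_classical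
    (u : ℕ → ℝ → ℝ → ℝ)
    (h0 : ∀ x t : ℝ, u 0 x t = x)
    (hrec : ∀ (k : ℕ) (x t : ℝ),
      u (k + 1) x t =
        ∫ τ in (0:ℝ)..t,
          (iteratedDeriv 2 (fun y => u k y τ) x
            + ∑ r ∈ Finset.range (k + 1),
                u r (x / 2) (τ / 2) * deriv (fun y => u (k - r) y (τ / 2)) x
            + (1 / 2) * u k x τ)) :
    (∀ (k : ℕ) (x t : ℝ), u k x t = x * t ^ k / (Nat.factorial k)) ∧
    (∀ x t : ℝ, HasSum (fun k : ℕ => u k x t) (x * Real.exp t)) := by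
  have main : ∀ (k : ℕ) (x t : ℝ), u k x t = x * t ^ k / (Nat.factorial k) := by
    intro k
    induction k using Nat.strong_induction_on with
    | _ k IH =>
      match k with
      | 0 => intro x t; simp [h0]
      | k + 1 =>
        intro x t
        rw [hrec]
        have key : ∀ τ : ℝ,
            (iteratedDeriv 2 (fun y => u k y τ) x
              + ∑ r ∈ Finset.range (k + 1),
                  u r (x / 2) (τ / 2) * deriv (fun y => u (k - r) y (τ / 2)) x
              + (1 / 2) * u k x τ)
            = x / (Nat.factorial k) * τ ^ k := by
          intro τ
          have hk : ∀ τ' : ℝ, (fun y => u k y τ') = fun y => y * (τ' ^ k / (Nat.factorial k)) := by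
            intro τ'; funext y; rw [IH k (Nat.lt_succ_self k)]; ring
          have h2 : iteratedDeriv 2 (fun y => u k y τ) x = 0 := by
            rw [hk]
            rw [show (2:ℕ) = 1 + 1 from rfl, iteratedDeriv_succ, iteratedDeriv_succ,
              iteratedDeriv_zero]
            have : deriv (fun y : ℝ => y * (τ ^ k / (Nat.factorial k)))
                = fun _ : ℝ => τ ^ k / (Nat.factorial k) := by
              funext y; simp
            rw [this]; simp
          have hsum : (∑ r ∈ Finset.range (k + 1),
              u r (x / 2) (τ / 2) * deriv (fun y => u (k - r) y (τ / 2)) x)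
              = x / 2 * (τ ^ k / (Nat.factorial k)) := by
            have hterm : ∀ r ∈ Finset.range (k + 1),
                u r (x / 2) (τ / 2) * deriv (fun y => u (k - r) y (τ / 2)) x
                = x / 2 * (τ / 2) ^ k * ((k.choose r : ℝ) / (Nat.factorial k)) := by
              intro r hr
              have hrk : r ≤ k := Nat.lt_succ_iff.mp (Finset.mem_range.mp hr)
              have hd : deriv (fun y => u (k - r) y (τ / 2)) x
                  = (τ / 2) ^ (k - r) / (Nat.factorial (k - r)) := by
                have : (fun y => u (k - r) y (τ / 2))
                    = fun y => y * ((τ / 2) ^ (k - r) / (Nat.factorial (k - r))) := by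
                  funext y
                  rw [IH (k - r) (Nat.lt_succ_of_le (Nat.sub_le k r))]; ring
                rw [this]; simp
              rw [hd, IH r (Nat.lt_succ_of_le hrk)]
              have hpow : (τ / 2) ^ r * (τ / 2) ^ (k - r) = (τ / 2) ^ k := by
                rw [← pow_add, Nat.add_sub_cancel' hrk]
              have hchoose : (k.choose r : ℝ)
                  = (Nat.factorial k : ℝ) / ((Nat.factorial r) * (Nat.factorial (k - r))) :=
                Nat.cast_choose ℝ hrk
              have hfr : (Nat.factorial r : ℝ) ≠ 0 := by positivity
              have hfkr : (Nat.factorial (k - r) : ℝ) ≠ 0 := by positivity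
              have hfk : (Nat.factorial k : ℝ) ≠ 0 := by positivity
              have hp2 : (2:ℝ) ^ r * 2 ^ (k - r) = 2 ^ k := by
                rw [← pow_add, Nat.add_sub_cancel' hrk]
              have hpτ : τ ^ r * τ ^ (k - r) = τ ^ k := by
                rw [← pow_add, Nat.add_sub_cancel' hrk]
              field_simp [hchoose]
              rw [hchoose, ← hpow]; field_simp
            rw [Finset.sum_congr rfl hterm, ← Finset.mul_sum, ← Finset.sum_div,
              ← Nat.cast_sum, Nat.sum_range_choose]
            have hfk : (Nat.factorial k : ℝ) ≠ 0 := by positivity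
            rw [div_pow]
            push_cast
            field_simp
          rw [h2, hsum, IH k (Nat.lt_succ_self k)]
          ring
        rw [intervalIntegral.integral_congr (fun τ _ => key τ)]
        rw [intervalIntegral.integral_const_mul, integral_pow]
        rw [Nat.factorial_succ]
        push_cast
        rw [zero_pow (Nat.succ_ne_zero k)]
        have hfk : (Nat.factorial k : ℝ) ≠ 0 := by positivity
        have hk1 : ((k:ℝ) + 1) ≠ 0 := by positivity
        field_simp
        ring
  refine ⟨main, fun x t => ?_⟩
  have h := (NormedSpace.expSeries_div_hasSum_exp t).mul_left x
  rw [← Real.exp_eq_exp_ℝ] at h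
  suffices e : (fun k : ℕ => u k x t) = fun i => x * (t ^ i / (i.factorial : ℝ)) by rw [e]; exact h
  funext k
  rw [main k x t]; ring
end

section
/- Define a sequence of functions u_k : ℝ × ℝ → ℝ recursively by u_0(x, t) = x² and u_{k+1}(x, t) = ∫₀ᵗ [ ∑_{r=0}^{k} u_r(x, τ/2) · (∂²u_{k−r}/∂x²)(x, τ/2) − u_k(x, τ) ] dτ. Then for every k ≥ 0 and all x, t ∈ ℝ, u_k(x, t) = x² · t^k / k!; consequently ∑_{k=0}^{∞} u_k(x, t) = x²·e^t. -/
private lemma iter2 (c x : ℝ) : iteratedDeriv 2 (fun y : ℝ => y ^ 2 * c) x = 2 * c := by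
  have h1 : deriv (fun y : ℝ => y ^ 2 * c) = fun y : ℝ => 2 * y * c := by
    ext y
    rw [deriv_mul_const (by fun_prop)]
    simp [mul_comm]
  rw [show (2:ℕ) = 1 + 1 from rfl, iteratedDeriv_succ, iteratedDeriv_one, h1]
  have h2 : deriv (fun y : ℝ => 2 * y * c) x = 2 * c := by
    have : (fun y : ℝ => 2 * y * c) = fun y : ℝ => (2 * c) * y := by ext y; ring
    rw [this, deriv_const_mul _ differentiable_fun_id.differentiableAt]
    simp
  rw [h2]

private lemma sum_inv_fact (k : ℕ) :
    ∑ r ∈ Finset.range (k + 1), (1:ℝ) / (Nat.factorial r * Nat.factorial (k - r)) =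
      2 ^ k / Nat.factorial k := by
  have h : ∀ r ∈ Finset.range (k + 1),
      (1:ℝ) / (Nat.factorial r * Nat.factorial (k - r)) =
        (Nat.choose k r : ℝ) / Nat.factorial k := by
    intro r hr
    have hrk : r ≤ k := Nat.lt_succ_iff.mp (Finset.mem_range.mp hr)
    have := Nat.choose_mul_factorial_mul_factorial hrk
    have hcast : (Nat.choose k r : ℝ) * Nat.factorial r * Nat.factorial (k - r)
        = Nat.factorial k := by exact_mod_cast congrArg (Nat.cast : ℕ → ℝ) this
    have h1 : (Nat.factorial r : ℝ) ≠ 0 := Nat.cast_ne_zero.mpr (Nat.factorial_ne_zero r)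
    have h2 : (Nat.factorial (k - r) : ℝ) ≠ 0 := Nat.cast_ne_zero.mpr (Nat.factorial_ne_zero _)
    have h3 : (Nat.factorial k : ℝ) ≠ 0 := Nat.cast_ne_zero.mpr (Nat.factorial_ne_zero k)
    field_simp
    linarith [hcast]
  rw [Finset.sum_congr rfl h, ← Finset.sum_div]
  congr 1
  rw [← Nat.cast_sum, Nat.sum_range_choose]
  push_cast; ring

theorem hptm_iterates_ex2_classical
    (u : ℕ → ℝ → ℝ → ℝ)
    (h0 : ∀ x t : ℝ, u 0 x t = x ^ 2)
    (hrec : ∀ (k : ℕ) (x t : ℝ),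
      u (k + 1) x t =
        ∫ τ in (0:ℝ)..t,
          ((∑ r ∈ Finset.range (k + 1),
              u r x (τ / 2) * iteratedDeriv 2 (fun y => u (k - r) y (τ / 2)) x)
            - u k x τ)) :
    (∀ (k : ℕ) (x t : ℝ), u k x t = x ^ 2 * t ^ k / (Nat.factorial k)) ∧
    (∀ x t : ℝ, HasSum (fun k : ℕ => u k x t) (x ^ 2 * Real.exp t)) := by
  have key : ∀ (k : ℕ) (x t : ℝ), u k x t = x ^ 2 * t ^ k / (Nat.factorial k) := by
    intro k
    induction k using Nat.strong_induction_on with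
    | _ k ih =>
      match k with
      | 0 => intro x t; simp [h0]
      | k + 1 =>
        intro x t
        rw [hrec]
        have hint : ∀ τ : ℝ,
            ((∑ r ∈ Finset.range (k + 1),
                u r x (τ / 2) * iteratedDeriv 2 (fun y => u (k - r) y (τ / 2)) x)
              - u k x τ) = (x ^ 2 / Nat.factorial k) * τ ^ k := by
          intro τ
          have hterm : ∀ r ∈ Finset.range (k + 1),
              u r x (τ / 2) * iteratedDeriv 2 (fun y => u (k - r) y (τ / 2)) x
                = 2 * x ^ 2 * (τ / 2) ^ k *
                    ((1:ℝ) / (Nat.factorial r * Nat.factorial (k - r))) := by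
            intro r hr
            have hrk : r ≤ k := Nat.lt_succ_iff.mp (Finset.mem_range.mp hr)
            have hfun : (fun y => u (k - r) y (τ / 2))
                = fun y : ℝ => y ^ 2 * ((τ / 2) ^ (k - r) / Nat.factorial (k - r)) := by
              ext y
              rw [ih (k - r) (Nat.lt_succ_of_le (Nat.sub_le k r)) y (τ / 2)]
              ring
            rw [hfun, iter2, ih r (Nat.lt_succ_of_le hrk) x (τ / 2)]
            have hpow : (τ / 2) ^ r * (τ / 2) ^ (k - r) = (τ / 2) ^ k := by
              rw [← pow_add, Nat.add_sub_cancel' hrk]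
            have hstep : x ^ 2 * (τ / 2) ^ r / Nat.factorial r *
                (2 * ((τ / 2) ^ (k - r) / Nat.factorial (k - r)))
                = 2 * x ^ 2 * ((τ / 2) ^ r * (τ / 2) ^ (k - r)) *
                    ((1:ℝ) / (Nat.factorial r * Nat.factorial (k - r))) := by
              ring
            rw [hstep, hpow]
          rw [Finset.sum_congr rfl hterm, ← Finset.mul_sum, sum_inv_fact,
            ih k (Nat.lt_succ_self k) x τ]
          have h2 : ((τ / 2) ^ k * 2 ^ k : ℝ) = τ ^ k := by
            rw [div_pow, div_mul_cancel₀]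
            positivity
          rw [show 2 * x ^ 2 * (τ / 2) ^ k * ((2:ℝ) ^ k / Nat.factorial k)
              = 2 * x ^ 2 * ((τ / 2) ^ k * 2 ^ k) / Nat.factorial k by ring, h2]
          ring
        rw [intervalIntegral.integral_congr (fun τ _ => hint τ),
          intervalIntegral.integral_const_mul, integral_pow]
        have h3 : (Nat.factorial (k + 1) : ℝ) = (k + 1) * Nat.factorial k := by
          rw [Nat.factorial_succ]; push_cast; ring
        rw [h3]
        have hk1 : ((k : ℝ) + 1) ≠ 0 := by positivity
        have hfk : (Nat.factorial k : ℝ) ≠ 0 := Nat.cast_ne_zero.mpr (Nat.factorial_ne_zero k)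
        rw [zero_pow (Nat.succ_ne_zero k), sub_zero]
        field_simp
        all_goals try ring_nf
  refine ⟨key, fun x t => ?_⟩
  have h := (NormedSpace.expSeries_div_hasSum_exp t).mul_left (x ^ 2)
  rw [← Real.exp_eq_exp_ℝ] at h
  convert h using 2 with k
  · rfl
  rw [key k x t, mul_div_assoc]
end
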